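/- In a finite directed graph where every vertex can reach the goal set and every cycle has strictly positive total cost, the Bellman equation J(x) = min over successors x' of (c(x,x') + J(x')) for x outside the goal, with J = 0 on the goal, has a unique solution, and this solution equals the minimum cost over all paths from x to the goal set. -/

import Mathlib

open Finset

section Bellman

variable {V : Type*} [Fintype V] {E : V → V → Prop} {c : V → V → ℝ} {Goal : Set V}

/-- Path predicate: `σ` is a path of length `N` from `x` to the goal. -/
def GPath (E : V → V → Prop) (Goal : Set V) (σ : ℕ → V) (N : ℕ) (x : V) : Prop :=
  σ 0 = x ∧ (∀ k < N, E (σ k) (σ (k+1))) ∧ (∀ k < N, σ k ∉ Goal) ∧ σ N ∈ Goal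

/-- Cycle removal: any path to the goal can be shortened to one of length at most
`Fintype.card V` with no larger cost. -/
lemma shorten
    (hcycle : ∀ (σ : ℕ → V) (n : ℕ), 0 < n → (∀ k < n, E (σ k) (σ (k+1))) →
      σ n = σ 0 → 0 < ∑ k ∈ Finset.range n, c (σ k) (σ (k+1)))
    (N : ℕ) : ∀ (σ : ℕ → V) (x : V), GPath E Goal σ N x →
      ∃ τ M, M ≤ Fintype.card V ∧ GPath E Goal τ M x ∧
        ∑ k ∈ Finset.range M, c (τ k) (τ (k+1)) ≤ ∑ k ∈ Finset.range N, c (σ k) (σ (k+1)) := by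
  induction N using Nat.strong_induction_on with
  | _ N IH =>
    intro σ x h
    by_cases hN : N ≤ Fintype.card V
    · exact ⟨σ, N, hN, h, le_refl _⟩
    push_neg at hN
    obtain ⟨h0, hE, hG, hNg⟩ := h
    obtain ⟨a, b, hab, hba⟩ : ∃ a b : ℕ, a < b ∧ b ≤ Fintype.card V ∧ σ a = σ b := by
      obtain ⟨i, j, hij, heq⟩ := Fintype.exists_ne_map_eq_of_card_lt
        (fun k : Fin (Fintype.card V + 1) => σ k) (by simp [Fintype.card_fin])
      rcases lt_or_gt_of_ne hij with h' | h'
      · exact ⟨i, j, h', by omega, heq⟩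
      · exact ⟨j, i, h', by omega, heq.symm⟩
    obtain ⟨hb, heq⟩ := hba
    set d := b - a with hd
    set M := N - d with hM
    set τ : ℕ → V := fun k => if k ≤ a then σ k else σ (k + d) with hτdef
    have hτlo : ∀ k ≤ a, τ k = σ k := fun k hk => if_pos hk
    have hτhi : ∀ k, a ≤ k → τ k = σ (k + d) := by
      intro k hk
      rcases Nat.lt_or_ge a k with hlt | hge
      · exact if_neg (by omega)
      · have hka : k = a := le_antisymm hge hk
        rw [hτlo k hge, hka, heq]
        congr 1; omega
    have hpath : GPath E Goal τ M x := by
      refine ⟨by rw [hτlo 0 (by omega)]; exact h0, ?_, ?_, ?_⟩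
      · intro k hk
        rcases lt_or_ge k a with h' | h'
        · rw [hτlo k (by omega), hτlo (k+1) (by omega)]
          exact hE k (by omega)
        · rw [hτhi k h', hτhi (k+1) (by omega), show k + 1 + d = k + d + 1 by omega]
          exact hE (k+d) (by omega)
      · intro k hk
        rcases le_or_gt k a with h' | h'
        · rw [hτlo k h']; exact hG k (by omega)
        · rw [hτhi k (by omega)]; exact hG (k+d) (by omega)
      · rw [hτhi M (by omega), show M + d = N by omega]; exact hNg
    have hsum : ∑ k ∈ Finset.range M, c (τ k) (τ (k+1)) =
        ∑ k ∈ Finset.range a, c (σ k) (σ (k+1)) + ∑ k ∈ Finset.Ico b N, c (σ k) (σ (k+1)) := by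
      rw [Finset.range_eq_Ico, ← Finset.sum_Ico_consecutive _ (Nat.zero_le a) (show a ≤ M by omega)]
      congr 1
      · rw [← Finset.range_eq_Ico]
        refine Finset.sum_congr rfl fun k hk => ?_
        rw [Finset.mem_range] at hk
        rw [hτlo k (by omega), hτlo (k+1) (by omega)]
      · rw [Finset.sum_Ico_eq_sum_range, Finset.sum_Ico_eq_sum_range]
        refine Finset.sum_congr (by congr 1; omega) fun k _ => ?_
        rw [hτhi (a+k) (by omega), hτhi (a+k+1) (by omega),
          show a + k + d = b + k by omega, show a + k + 1 + d = b + k + 1 by omega]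
    have htot : ∑ k ∈ Finset.range N, c (σ k) (σ (k+1)) =
        (∑ k ∈ Finset.range a, c (σ k) (σ (k+1)) + ∑ k ∈ Finset.Ico b N, c (σ k) (σ (k+1)))
          + ∑ k ∈ Finset.Ico a b, c (σ k) (σ (k+1)) := by
      rw [Finset.range_eq_Ico,
        ← Finset.sum_Ico_consecutive _ (Nat.zero_le b) (show b ≤ N by omega),
        ← Finset.sum_Ico_consecutive _ (Nat.zero_le a) (show a ≤ b by omega),
        ← Finset.range_eq_Ico]
      ring
    have hcyc : 0 < ∑ k ∈ Finset.Ico a b, c (σ k) (σ (k+1)) := by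
      have := hcycle (fun k => σ (a + k)) d (by omega)
        (fun k hk => by
          simp only [← Nat.add_assoc]
          exact hE (a+k) (by omega))
        (by rw [show a + d = b by omega, show a + 0 = a from rfl, heq])
      simp only [← Nat.add_assoc] at this
      rw [Finset.sum_Ico_eq_sum_range, show b - a = d from rfl]
      exact this
    have hle : ∑ k ∈ Finset.range M, c (τ k) (τ (k+1)) ≤
        ∑ k ∈ Finset.range N, c (σ k) (σ (k+1)) := by
      rw [hsum, htot]; linarith
    obtain ⟨ρ, K, hK, hρ, hρle⟩ := IH M (by omega) τ x hpath
    exact ⟨ρ, K, hK, hρ, le_trans hρle hle⟩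


/-- The set of costs of paths from `x` to the goal. -/
def CostSet (E : V → V → Prop) (c : V → V → ℝ) (Goal : Set V) (x : V) : Set ℝ :=
  {r | ∃ σ N, GPath E Goal σ N x ∧ r = ∑ k ∈ Finset.range N, c (σ k) (σ (k+1))}

lemma exists_isLeast
    (hreach : ∀ x, ∃ (σ : ℕ → V) (N : ℕ), σ 0 = x ∧ (∀ k < N, E (σ k) (σ (k+1))) ∧
      (∀ k < N, σ k ∉ Goal) ∧ σ N ∈ Goal)
    (hcycle : ∀ (σ : ℕ → V) (n : ℕ), 0 < n → (∀ k < n, E (σ k) (σ (k+1))) →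
      σ n = σ 0 → 0 < ∑ k ∈ Finset.range n, c (σ k) (σ (k+1)))
    (x : V) : ∃ r, IsLeast (CostSet E c Goal x) r := by
  classical
  set n := Fintype.card V with hn
  set T : Set ℝ := {r | ∃ σ N, N ≤ n ∧ GPath E Goal σ N x ∧
    r = ∑ k ∈ Finset.range N, c (σ k) (σ (k+1))} with hT
  have hfin : T.Finite := by
    apply Set.Finite.subset (Set.finite_range
      (fun p : (Fin (n+1) → V) × Fin (n+1) =>
        ∑ k ∈ Finset.range (p.2 : ℕ),
          c (p.1 ⟨min k n, by omega⟩) (p.1 ⟨min (k+1) n, by omega⟩)))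
    rintro r ⟨σ, N, hN, _, rfl⟩
    refine ⟨(fun m : Fin (n+1) => σ m, ⟨N, by omega⟩), ?_⟩
    refine Finset.sum_congr rfl fun k hk => ?_
    rw [Finset.mem_range] at hk
    simp only []
    rw [show min k n = k by omega, show min (k+1) n = k+1 by omega]
  have hTne : T.Nonempty := by
    obtain ⟨σ, N, h1, h2, h3, h4⟩ := hreach x
    obtain ⟨τ, M, hM, hτ, _⟩ := shorten hcycle N σ x ⟨h1, h2, h3, h4⟩
    exact ⟨_, τ, M, hM, hτ, rfl⟩
  refine ⟨sInf T, ?_, ?_⟩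
  · obtain ⟨σ, N, _, hp, hr⟩ := hTne.csInf_mem hfin
    exact ⟨σ, N, hp, hr⟩
  · rintro s ⟨σ, N, hp, rfl⟩
    obtain ⟨τ, M, hM, hτ, hle⟩ := shorten hcycle N σ x hp
    exact le_trans (csInf_le hfin.bddBelow ⟨τ, M, hM, hτ, rfl⟩) hle

omit [Fintype V] in
lemma bellman_le (J : V → ℝ)
    (hJ0 : ∀ x ∈ Goal, J x = 0)
    (hJb : ∀ x ∉ Goal, IsLeast {r | ∃ y, E x y ∧ r = c x y + J y} (J x)) :
    ∀ (N : ℕ) (σ : ℕ → V), (∀ k < N, E (σ k) (σ (k+1))) → (∀ k < N, σ k ∉ Goal) →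
      σ N ∈ Goal → J (σ 0) ≤ ∑ k ∈ Finset.range N, c (σ k) (σ (k+1)) := by
  intro N
  induction N with
  | zero => intro σ _ _ hg; simp [hJ0 _ hg]
  | succ n IH =>
    intro σ hE hG hg
    have h0 : σ 0 ∉ Goal := hG 0 (by omega)
    have h1 : J (σ 0) ≤ c (σ 0) (σ 1) + J (σ 1) :=
      (hJb _ h0).2 ⟨σ 1, hE 0 (by omega), rfl⟩
    have h2 := IH (fun k => σ (k+1)) (fun k hk => hE (k+1) (by omega))
      (fun k hk => hG (k+1) (by omega)) hg
    rw [Finset.sum_range_succ']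
    have h2' : J (σ 1) ≤ ∑ k ∈ Finset.range n, c (σ (k+1)) (σ (k+1+1)) := h2
    linarith


lemma bellman_mem
    (hcycle : ∀ (σ : ℕ → V) (n : ℕ), 0 < n → (∀ k < n, E (σ k) (σ (k+1))) →
      σ n = σ 0 → 0 < ∑ k ∈ Finset.range n, c (σ k) (σ (k+1)))
    (J : V → ℝ)
    (hJ0 : ∀ x ∈ Goal, J x = 0)
    (hJb : ∀ x ∉ Goal, IsLeast {r | ∃ y, E x y ∧ r = c x y + J y} (J x))
    (x : V) : J x ∈ CostSet E c Goal x := by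
  classical
  set next : V → V := fun v => if h : v ∉ Goal then (hJb v h).1.choose else v with hnextdef
  have hnext : ∀ v (h : v ∉ Goal), E v (next v) ∧ J v = c v (next v) + J (next v) := by
    intro v h
    have hs := (hJb v h).1.choose_spec
    simp only [hnextdef, dif_pos h]
    exact ⟨hs.1, hs.2⟩
  set σ : ℕ → V := fun k => next^[k] x with hσdef
  have hσs : ∀ k, σ (k+1) = next (σ k) := fun k => Function.iterate_succ_apply' next k x
  have htel : ∀ (m t : ℕ), (∀ k < t, σ (m+k) ∉ Goal) →
      J (σ m) = (∑ k ∈ Finset.range t, c (σ (m+k)) (σ (m+k+1))) + J (σ (m+t)) := by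
    intro m t
    induction t with
    | zero => intro _; simp
    | succ s IH =>
      intro hg
      have e3 : σ (m + (s+1)) = next (σ (m + s)) := by
        rw [show m + (s+1) = (m+s)+1 by omega, hσs]
      have e4 : σ (m + s + 1) = next (σ (m + s)) := hσs _
      rw [Finset.sum_range_succ, IH (fun k hk => hg k (by omega)), e3, e4,
        (hnext (σ (m+s)) (hg s (by omega))).2]
      ring
  have hterm : ∃ k, σ k ∈ Goal := by
    by_contra hc
    push_neg at hc
    obtain ⟨a, b, hab, heq⟩ : ∃ a b : ℕ, a < b ∧ σ a = σ b := by
      obtain ⟨i, j, hij, heq⟩ := Fintype.exists_ne_map_eq_of_card_lt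
        (fun k : Fin (Fintype.card V + 1) => σ k) (by simp [Fintype.card_fin])
      rcases lt_or_gt_of_ne hij with h' | h'
      · exact ⟨i, j, h', heq⟩
      · exact ⟨j, i, h', heq.symm⟩
    have hpos := hcycle (fun k => σ (a + k)) (b - a) (by omega)
      (fun k hk => by
        simp only [← Nat.add_assoc]
        rw [hσs (a+k)]
        exact (hnext _ (hc _)).1)
      (by rw [show a + (b-a) = b by omega, show a + 0 = a from rfl, heq])
    simp only [← Nat.add_assoc] at hpos
    have := htel a (b - a) (fun k _ => hc _)
    rw [show a + (b - a) = b by omega, ← heq] at this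
    linarith
  set N := Nat.find hterm with hN
  have hNg : σ N ∈ Goal := Nat.find_spec hterm
  have hlt : ∀ k < N, σ k ∉ Goal := fun k hk => Nat.find_min hterm hk
  have hcost := htel 0 N (by simpa using hlt)
  simp only [Nat.zero_add] at hcost
  rw [hJ0 _ hNg, add_zero] at hcost
  exact ⟨σ, N, ⟨rfl, fun k hk => by rw [hσs]; exact (hnext _ (hlt k hk)).1, hlt, hNg⟩,
    by rw [show σ 0 = x from rfl] at hcost; exact hcost⟩


lemma exists_bellman
    (hreach : ∀ x, ∃ (σ : ℕ → V) (N : ℕ), σ 0 = x ∧ (∀ k < N, E (σ k) (σ (k+1))) ∧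
      (∀ k < N, σ k ∉ Goal) ∧ σ N ∈ Goal)
    (hcycle : ∀ (σ : ℕ → V) (n : ℕ), 0 < n → (∀ k < n, E (σ k) (σ (k+1))) →
      σ n = σ 0 → 0 < ∑ k ∈ Finset.range n, c (σ k) (σ (k+1))) :
    ∃ J : V → ℝ, (∀ x ∈ Goal, J x = 0) ∧
      ∀ x ∉ Goal, IsLeast {r | ∃ y, E x y ∧ r = c x y + J y} (J x) := by
  classical
  choose J hJ using exists_isLeast hreach hcycle
  refine ⟨J, ?_, ?_⟩
  · intro x hx
    obtain ⟨σ, N, ⟨h0, hE, hG, hg⟩, hr⟩ := (hJ x).1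
    have hN0 : N = 0 := by
      by_contra h
      exact hG 0 (by omega) (h0 ▸ hx)
    rw [hr, hN0]
    simp
  · intro x hx
    -- lower bound part first
    have hlb : ∀ y, E x y → J x ≤ c x y + J y := by
      intro y hxy
      obtain ⟨τ, M, ⟨h0, hE, hG, hg⟩, hr⟩ := (hJ y).1
      set σ' : ℕ → V := fun k => Nat.casesOn k x (fun m => τ m) with hσ'
      have hmem : c x y + J y ∈ CostSet E c Goal x := by
        refine ⟨σ', M + 1, ⟨rfl, ?_, ?_, hg⟩, ?_⟩
        · intro k hk
          cases k with
          | zero => show E x (τ 0); rw [h0]; exact hxy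
          | succ m => exact hE m (by omega)
        · intro k hk
          cases k with
          | zero => exact hx
          | succ m => exact hG m (by omega)
        · rw [Finset.sum_range_succ']
          show c x y + J y = (∑ k ∈ Finset.range M, c (τ k) (τ (k+1))) + c x (τ 0)
          rw [← hr, h0]; ring
      exact (hJ x).2 hmem
    obtain ⟨σ, N, ⟨h0, hE, hG, hg⟩, hr⟩ := (hJ x).1
    have hN : N ≠ 0 := by rintro rfl; exact hx (h0 ▸ hg)
    obtain ⟨n, rfl⟩ := Nat.exists_eq_succ_of_ne_zero hN
    have hE1 : E x (σ 1) := h0 ▸ hE 0 (by omega)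
    have hyle : J (σ 1) ≤ ∑ k ∈ Finset.range n, c (σ (k+1)) (σ (k+1+1)) :=
      (hJ (σ 1)).2 ⟨fun k => σ (k+1), n, ⟨rfl, fun k hk => hE (k+1) (by omega),
        fun k hk => hG (k+1) (by omega), hg⟩, rfl⟩
    have hcost : J x = c x (σ 1) + ∑ k ∈ Finset.range n, c (σ (k+1)) (σ (k+1+1)) := by
      rw [hr, Finset.sum_range_succ', h0]
      ring
    refine ⟨⟨σ 1, hE1, ?_⟩, ?_⟩
    · have := hlb (σ 1) hE1
      linarith
    · rintro r ⟨y, hxy, rfl⟩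
      exact hlb y hxy

end Bellman

/-- In a finite directed graph where every vertex can reach the goal set and every
directed cycle has strictly positive total cost, the Bellman equation (with `J = 0` on
the goal) has a unique solution, and this solution equals the minimum cost over all
paths from each vertex to the goal set. -/
theorem stmt_15 {V : Type*} [Fintype V] (E : V → V → Prop) (c : V → V → ℝ)
    (Goal : Set V)
    -- every vertex can reach the goal
    (hreach : ∀ x, ∃ (σ : ℕ → V) (N : ℕ), σ 0 = x ∧ (∀ k < N, E (σ k) (σ (k+1))) ∧
      (∀ k < N, σ k ∉ Goal) ∧ σ N ∈ Goal)
    -- every directed cycle has strictly positive total cost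
    (hcycle : ∀ (σ : ℕ → V) (n : ℕ), 0 < n → (∀ k < n, E (σ k) (σ (k+1))) →
      σ n = σ 0 → 0 < ∑ k ∈ Finset.range n, c (σ k) (σ (k+1))) :
    (∃! J : V → ℝ, (∀ x ∈ Goal, J x = 0) ∧
      ∀ x ∉ Goal, IsLeast {r | ∃ y, E x y ∧ r = c x y + J y} (J x)) ∧
    (∀ J : V → ℝ,
      ((∀ x ∈ Goal, J x = 0) ∧
        ∀ x ∉ Goal, IsLeast {r | ∃ y, E x y ∧ r = c x y + J y} (J x)) →
      ∀ x, IsLeast {r | ∃ (σ : ℕ → V) (N : ℕ), σ 0 = x ∧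
        (∀ k < N, E (σ k) (σ (k+1))) ∧ (∀ k < N, σ k ∉ Goal) ∧ σ N ∈ Goal ∧
        r = ∑ k ∈ Finset.range N, c (σ k) (σ (k+1))} (J x)) := by
  have hset : ∀ x : V, {r : ℝ | ∃ (σ : ℕ → V) (N : ℕ), σ 0 = x ∧
      (∀ k < N, E (σ k) (σ (k+1))) ∧ (∀ k < N, σ k ∉ Goal) ∧ σ N ∈ Goal ∧
      r = ∑ k ∈ Finset.range N, c (σ k) (σ (k+1))} = CostSet E c Goal x := by
    intro x
    ext r
    constructor
    · rintro ⟨σ, N, h1, h2, h3, h4, h5⟩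
      exact ⟨σ, N, ⟨h1, h2, h3, h4⟩, h5⟩
    · rintro ⟨σ, N, ⟨h1, h2, h3, h4⟩, h5⟩
      exact ⟨σ, N, h1, h2, h3, h4, h5⟩
  have part2 : ∀ J : V → ℝ,
      ((∀ x ∈ Goal, J x = 0) ∧
        ∀ x ∉ Goal, IsLeast {r | ∃ y, E x y ∧ r = c x y + J y} (J x)) →
      ∀ x, IsLeast (CostSet E c Goal x) (J x) := by
    rintro J ⟨hJ0, hJb⟩ x
    refine ⟨bellman_mem hcycle J hJ0 hJb x, ?_⟩
    rintro r ⟨σ, N, ⟨h0, hE, hG, hg⟩, rfl⟩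
    have := bellman_le J hJ0 hJb N σ hE hG hg
    rwa [h0] at this
  constructor
  · obtain ⟨J, hJ⟩ := exists_bellman hreach hcycle
    refine ⟨J, hJ, ?_⟩
    intro K hK
    funext x
    exact (part2 K hK x).unique (part2 J hJ x)
  · intro J hJ x
    rw [hset x]
    exact part2 J hJ x
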